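/- For a 2-class M/G/1 queue with 0 < ρ₁, 0 < ρ₂, ρ = ρ₁+ρ₂ < 1, W₀ > 0, and any p₁ ∈ [1/2, 1], setting β = (2-ρ)(1-p₁)/(1-ρ(1-p₁)) yields β ∈ [0,1] and W₀(1-ρ(1-β))/((1-ρ)(1-ρ₁(1-β))) = (1-ρp₁)W₀/((1-ρ₁-(1-p₁)ρ₂)(1-ρ₂-p₁ρ₁) - p₁(1-p₁)ρ₁ρ₂), i.e., the DDP and relative priority class-1 mean waiting times coincide. -/

import Mathlib

theorem ddp_relative_priority_equivalence_upper_branch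
    (ρ₁ ρ₂ W₀ p₁ : ℝ) (h₁ : 0 < ρ₁) (h₂ : 0 < ρ₂) (hρ : ρ₁ + ρ₂ < 1) (hW : 0 < W₀)
    (hp : p₁ ∈ Set.Icc (1 / 2 : ℝ) 1) :
    let ρ := ρ₁ + ρ₂
    let β := (2 - ρ) * (1 - p₁) / (1 - ρ * (1 - p₁))
    β ∈ Set.Icc (0 : ℝ) 1 ∧
    W₀ * (1 - ρ * (1 - β)) / ((1 - ρ) * (1 - ρ₁ * (1 - β)))
      = (1 - ρ * p₁) * W₀ /
        ((1 - ρ₁ - (1 - p₁) * ρ₂) * (1 - ρ₂ - p₁ * ρ₁) - p₁ * (1 - p₁) * ρ₁ * ρ₂) := by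
  obtain ⟨hpl, hpu⟩ := hp
  intro ρ β
  have hρdef : ρ = ρ₁ + ρ₂ := rfl
  have h1ρ : 0 < 1 - ρ := by rw [hρdef]; linarith
  have hD : 0 < 1 - ρ * (1 - p₁) := by rw [hρdef]; nlinarith
  have hβdef : β = (2 - ρ) * (1 - p₁) / (1 - ρ * (1 - p₁)) := rfl
  have hβ0 : 0 ≤ β := by
    rw [hβdef]
    apply div_nonneg _ hD.le
    rw [hρdef]; nlinarith
  have hβ1 : β ≤ 1 := by
    rw [hβdef, div_le_one hD]
    rw [hρdef]; nlinarith
  refine ⟨⟨hβ0, hβ1⟩, ?_⟩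
  have hN : 0 < 1 - ρ₂ * (1 - p₁) - ρ₁ * p₁ := by nlinarith
  have hE : (1 - ρ₁ - (1 - p₁) * ρ₂) * (1 - ρ₂ - p₁ * ρ₁) - p₁ * (1 - p₁) * ρ₁ * ρ₂
      = (1 - ρ) * (1 - ρ₂ * (1 - p₁) - ρ₁ * p₁) := by rw [hρdef]; ring
  have h1 : 1 - ρ * (1 - β) = (1 - ρ * p₁) / (1 - ρ * (1 - p₁)) := by
    rw [hβdef]; field_simp; ring
  have h2 : 1 - ρ₁ * (1 - β) = (1 - ρ₂ * (1 - p₁) - ρ₁ * p₁) / (1 - ρ * (1 - p₁)) := by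
    rw [hβdef, hρdef]; field_simp [show (1 - (ρ₁ + ρ₂) * (1 - p₁)) ≠ 0 from hD.ne']; ring
  rw [h1, h2, hE]
  field_simp
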